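/- (Characterization of persistently safe states.) For every state s, the optimal binary value satisfies v^*(s) = 0 if and only if there exists a policy π such that F_t^π(s) ∩ G = ∅ for all t ≥ 0; that is, s belongs to the set of persistently safe states S_safe = { s : min_{a ∈ A} b^*(s, a) = 0 } exactly when some policy avoids the failure set G for all future times starting from s. -/
import Mathlib


open scoped Classical

variable {S A : Type*}

/-- `reach F π t s` : the `t`-step reachable set from state `s` under policy `π`
(a policy assigns to each state the set of allowed actions).
`F_0^π(s) = {s}` and `F_{t+1}^π(s) = { F(s', a) : s' ∈ F_t^π(s), a ∈ π(s') }`. -/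
def reach (F : S → A → S) (π : S → Set A) : ℕ → S → Set S
  | 0, s => {s}
  | t + 1, s => {s'' | ∃ s' ∈ reach F π t s, ∃ a ∈ π s', s'' = F s' a}

/-- `reachSA F π t s a` : the `t`-step reachable set from the state-action pair `(s, a)`:
`F_0^π(s,a) = {s}`, `F_1^π(s,a) = {F(s,a)}`, and for `t ≥ 1`,
`F_{t+1}^π(s,a) = { F(s', a') : s' ∈ F_t^π(s,a), a' ∈ π(s') }`. -/
def reachSA (F : S → A → S) (π : S → Set A) : ℕ → S → A → Set S
  | 0, s, _ => {s}
  | 1, s, a => {F s a}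
  | t + 2, s, a => {s'' | ∃ s' ∈ reachSA F π (t + 1) s a, ∃ a' ∈ π s', s'' = F s' a'}

/-- The insecurity function: `i(s) = 1` if `s ∈ G`, else `0`. -/
noncomputable def insec (G : Set S) (s : S) : ℕ := if s ∈ G then 1 else 0

/-- The binary safety value function of a policy:
`v^π(s) = 1` iff some reachable state from `s` lies in `G`. -/
noncomputable def vPol (F : S → A → S) (G : Set S) (π : S → Set A) (s : S) : ℕ :=
  if ∃ t : ℕ, ∃ s' ∈ reach F π t s, s' ∈ G then 1 else 0

/-- The binary safety action-value function of a policy: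
`b^π(s,a) = 1` iff some reachable state from `(s,a)` lies in `G`. -/
noncomputable def bPol (F : S → A → S) (G : Set S) (π : S → Set A) (s : S) (a : A) : ℕ :=
  if ∃ t : ℕ, ∃ s' ∈ reachSA F π t s a, s' ∈ G then 1 else 0

/-- The optimal binary value function `v^*(s) = inf_π v^π(s)`,
the infimum over all (nonempty-support) policies. -/
noncomputable def vStar (F : S → A → S) (G : Set S) (s : S) : ℕ :=
  ⨅ π : {π : S → Set A // ∀ x, (π x).Nonempty}, vPol F G π.1 s

/-- The optimal binary action-value function `b^*(s,a) = inf_π b^π(s,a)`. -/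
noncomputable def bStar (F : S → A → S) (G : Set S) (s : S) (a : A) : ℕ :=
  ⨅ π : {π : S → Set A // ∀ x, (π x).Nonempty}, bPol F G π.1 s a

/-- The binary Bellman operator:
`(T b)(s,a) = i(s) + (1 − i(s)) · min_{a'} b(F(s,a), a')`. -/
noncomputable def Tb (F : S → A → S) (G : Set S) (b : S → A → ℕ) : S → A → ℕ :=
  fun s a => insec G s + (1 - insec G s) * ⨅ a' : A, b (F s a) a'

lemma nat_iInf_zero {ι : Sort*} [Nonempty ι] (f : ι → ℕ) :
    (⨅ i, f i) = 0 ↔ ∃ i, f i = 0 := by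
  rw [iInf, Nat.sInf_eq_zero]
  simp only [Set.mem_range]
  constructor
  · rintro (⟨i, hi⟩ | h)
    · exact ⟨i, hi⟩
    · exact absurd h (Set.range_nonempty f).ne_empty
  · rintro ⟨i, hi⟩
    exact Or.inl ⟨i, hi⟩

lemma reachSA_subset (F : S → A → S) (π : S → Set A) {s : S} {a : A} (ha : a ∈ π s) :
    ∀ t, reachSA F π t s a ⊆ reach F π t s := by
  intro t
  induction t with
  | zero => simp [reachSA, reach]
  | succ t ih =>
    match t, ih with
    | 0, _ =>
      intro x hx
      simp only [reachSA, Set.mem_singleton_iff] at hx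
      exact ⟨s, rfl, a, ha, hx⟩
    | n + 1, ih =>
      rintro x ⟨s', hs', a', ha', rfl⟩
      exact ⟨s', ih hs', a', ha', rfl⟩

lemma reachSA_succ (F : S → A → S) (π : S → Set A) (s : S) (a : A) :
    ∀ t, reachSA F π (t + 1) s a = reach F π t (F s a) := by
  intro t
  induction t with
  | zero => simp [reachSA, reach]
  | succ t ih => ext x; simp [reachSA, reach, ih]

lemma reach_pi' (F : S → A → S) (π : S → Set A) (s : S) (a : A) (t : ℕ) :
    reach F (fun x => if x = s then {a} else π x) t s ⊆
      {s} ∪ ⋃ t', reach F π t' (F s a) := by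
  induction t with
  | zero => simp [reach]
  | succ t ih =>
    rintro x ⟨s', hs', a', ha', rfl⟩
    rcases eq_or_ne s' s with rfl | hne
    · simp only [if_pos rfl, Set.mem_singleton_iff] at ha'
      subst ha'
      exact Or.inr (Set.mem_iUnion.2 ⟨0, rfl⟩)
    · have ha'' : a' ∈ π s' := by simpa [hne] using ha'
      rcases ih hs' with h | h
      · exact absurd h hne
      · obtain ⟨t', ht'⟩ := Set.mem_iUnion.1 h
        exact Or.inr (Set.mem_iUnion.2 ⟨t' + 1, ⟨s', ht', a', ha'', rfl⟩⟩)

/-- characterization of persistently safe states: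
`v^*(s) = 0` iff some policy avoids `G` for all future times from `s`; that is,
`s ∈ S_safe = { s : min_a b^*(s,a) = 0 }` exactly when such a policy exists. -/
theorem persistently_safe_iff [Fintype A] [Nonempty A] (F : S → A → S) (G : Set S) (s : S) :
    (vStar F G s = 0 ↔
      ∃ π : S → Set A, (∀ x, (π x).Nonempty) ∧ ∀ t : ℕ, reach F π t s ∩ G = ∅) ∧
    ((⨅ a : A, bStar F G s a) = 0 ↔
      ∃ π : S → Set A, (∀ x, (π x).Nonempty) ∧ ∀ t : ℕ, reach F π t s ∩ G = ∅) := by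
  have hPi : Nonempty {π : S → Set A // ∀ x, (π x).Nonempty} :=
    ⟨⟨fun _ => Set.univ, fun _ => Set.univ_nonempty⟩⟩
  have vPol_zero : ∀ (π : S → Set A),
      vPol F G π s = 0 ↔ ∀ t : ℕ, reach F π t s ∩ G = ∅ := by
    intro π
    simp only [vPol, ite_eq_right_iff, one_ne_zero, imp_false, not_exists, not_and,
      Set.eq_empty_iff_forall_notMem, Set.mem_inter_iff]
  have bPol_zero : ∀ (π : S → Set A) (a : A),
      bPol F G π s a = 0 ↔ ∀ t : ℕ, ∀ x ∈ reachSA F π t s a, x ∉ G := by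
    intro π a
    simp only [bPol, ite_eq_right_iff, one_ne_zero, imp_false, not_exists, not_and]
  -- from a safe policy, both quantities are zero
  have of_safe : (∃ π : S → Set A, (∀ x, (π x).Nonempty) ∧ ∀ t : ℕ, reach F π t s ∩ G = ∅) →
      vStar F G s = 0 ∧ (⨅ a : A, bStar F G s a) = 0 := by
    rintro ⟨π, hne, hsafe⟩
    have hv : vPol F G π s = 0 := (vPol_zero π).2 hsafe
    constructor
    · have h2 : vStar F G s ≤ 0 := by
        rw [vStar, ← hv]
        exact ciInf_le (OrderBot.bddBelow _) (⟨π, hne⟩ : {π : S → Set A // ∀ x, (π x).Nonempty})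
      omega
    · obtain ⟨a, ha⟩ := hne s
      have hb : bPol F G π s a = 0 := by
        rw [bPol_zero]
        intro t x hx hg
        have hxr : x ∈ reach F π t s := reachSA_subset F π ha t hx
        have := hsafe t
        exact absurd (Set.mem_inter hxr hg) (by simp [this])
      have h1 : bStar F G s a ≤ 0 := by
        rw [bStar, ← hb]
        exact ciInf_le (OrderBot.bddBelow _) (⟨π, hne⟩ : {π : S → Set A // ∀ x, (π x).Nonempty})
      have h2 : (⨅ a : A, bStar F G s a) ≤ bStar F G s a :=
        ciInf_le (OrderBot.bddBelow _) a
      omega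
  constructor
  · constructor
    · intro h
      rw [vStar, nat_iInf_zero] at h
      obtain ⟨⟨π, hne⟩, hπ⟩ := h
      exact ⟨π, hne, (vPol_zero π).1 hπ⟩
    · exact fun h => (of_safe h).1
  · constructor
    · intro h
      rw [nat_iInf_zero] at h
      obtain ⟨a, ha⟩ := h
      rw [bStar, nat_iInf_zero] at ha
      obtain ⟨⟨π, hne⟩, hπ⟩ := ha
      rw [bPol_zero] at hπ
      have hsG : s ∉ G := hπ 0 s rfl
      have hsafeR : ∀ t x, x ∈ reach F π t (F s a) → x ∉ G := by
        intro t x hx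
        exact hπ (t + 1) x (by rw [reachSA_succ]; exact hx)
      refine ⟨fun x => if x = s then {a} else π x, ?_, ?_⟩
      · intro x
        by_cases hx : x = s
        · simp [hx]
        · simpa [hx] using hne x
      · intro t
        ext x
        simp only [Set.mem_inter_iff, Set.mem_empty_iff_false, iff_false, not_and]
        intro hx hg
        rcases reach_pi' F π s a t hx with h | h
        · exact hsG (h ▸ hg)
        · obtain ⟨t', ht'⟩ := Set.mem_iUnion.1 h
          exact hsafeR t' x ht' hg
    · exact fun h => (of_safe h).2
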